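/- (Unique maximizer along rays.) Fix x̄ ∈ (0,∞)^n and N with N_i ≥ 1 for all i, and define f(λ) = λ / X(λ x̄, N) for λ ≥ 0. Then there is a unique λ* > 0 with h(λ* x̄) = 1, f is strictly increasing on [0, λ*] and strictly decreasing on [λ*, ∞); in particular λ* is the unique maximizer of f on [0,∞). -/

import Mathlib

open Finset

noncomputable def Xfun (n : ℕ) (a : ℝ) (x N : Fin n → ℝ) : ℝ :=
  a + (∑ k, (N k - 1) * x k) + (∏ k, (1 + x k)) - 1

noncomputable def hfun (n : ℕ) (a : ℝ) (x : Fin n → ℝ) : ℝ :=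
  (∑ i, x i / (1 + x i)) + (1 - a) / ∏ j, (1 + x j)

lemma aux_prod_sub_prod_le_sum {ι : Type*} [DecidableEq ι] (s : Finset ι) (f g : ι → ℝ)
    (h0 : ∀ i ∈ s, 0 ≤ g i) (h1 : ∀ i ∈ s, g i ≤ f i) (h2 : ∀ i ∈ s, f i ≤ 1) :
    ∏ i ∈ s, f i - ∏ i ∈ s, g i ≤ ∑ i ∈ s, (f i - g i) := by
  induction s using Finset.induction with
  | empty => simp
  | @insert i s hi ih =>
    rw [Finset.prod_insert hi, Finset.prod_insert hi, Finset.sum_insert hi]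
    have hFG : ∏ j ∈ s, g j ≤ ∏ j ∈ s, f j :=
      Finset.prod_le_prod (fun j hj => h0 j (Finset.mem_insert_of_mem hj))
        (fun j hj => h1 j (Finset.mem_insert_of_mem hj))
    have hG0 : 0 ≤ ∏ j ∈ s, g j :=
      Finset.prod_nonneg (fun j hj => h0 j (Finset.mem_insert_of_mem hj))
    have hG1 : ∏ j ∈ s, g j ≤ 1 :=
      Finset.prod_le_one (fun j hj => h0 j (Finset.mem_insert_of_mem hj))
        (fun j hj => le_trans (h1 j (Finset.mem_insert_of_mem hj)) (h2 j (Finset.mem_insert_of_mem hj)))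
    have hi0 := h0 i (Finset.mem_insert_self i s)
    have hi1 := h1 i (Finset.mem_insert_self i s)
    have hi2 := h2 i (Finset.mem_insert_self i s)
    have ihs := ih (fun j hj => h0 j (Finset.mem_insert_of_mem hj))
      (fun j hj => h1 j (Finset.mem_insert_of_mem hj))
      (fun j hj => h2 j (Finset.mem_insert_of_mem hj))
    nlinarith [hFG, hG0, hG1, hi0, hi1, hi2, ihs]

theorem stmt10 (n : ℕ) (hn : 2 ≤ n) (a : ℝ) (ha0 : 0 < a) (ha1 : a < 1)
    (xb : Fin n → ℝ) (hxb : ∀ i, 0 < xb i)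
    (N : Fin n → ℝ) (hN : ∀ i, 1 ≤ N i) :
    ∃ lam : ℝ, 0 < lam ∧ hfun n a (lam • xb) = 1 ∧
      (∀ μ : ℝ, 0 < μ → hfun n a (μ • xb) = 1 → μ = lam) ∧
      StrictMonoOn (fun t : ℝ => t / Xfun n a (t • xb) N) (Set.Icc 0 lam) ∧
      StrictAntiOn (fun t : ℝ => t / Xfun n a (t • xb) N) (Set.Ici lam) ∧
      (∀ t : ℝ, 0 ≤ t → t ≠ lam →
        t / Xfun n a (t • xb) N < lam / Xfun n a (lam • xb) N) := by
  classical
  -- notation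
  set P : ℝ → ℝ := fun t => ∏ k, (1 + t * xb k) with hP_def
  set S : ℝ := ∑ k, (N k - 1) * xb k with hS_def
  set φ : ℝ → ℝ := fun t => hfun n a (t • xb) with hφ_def
  set g : ℝ → ℝ := fun t => Xfun n a (t • xb) N with hg_def
  have hsmul : ∀ (t : ℝ) (i : Fin n), (t • xb) i = t * xb i := fun t i => rfl
  have hg_eq : ∀ t : ℝ, g t = a - 1 + t * S + P t := by
    intro t
    simp only [hg_def, Xfun, hsmul, hP_def, hS_def]
    have h1 : ∑ k, (N k - 1) * (t * xb k) = ∑ k, t * ((N k - 1) * xb k) :=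
      Finset.sum_congr rfl fun k _ => by ring
    rw [h1, ← Finset.mul_sum]
    ring
  have hφ_eq : ∀ t : ℝ, φ t = (∑ i, (t * xb i) / (1 + t * xb i)) + (1 - a) / P t := by
    intro t
    simp only [hφ_def, hfun, hsmul, hP_def]
  -- positivity facts
  have hfac : ∀ t : ℝ, 0 ≤ t → ∀ i, (1:ℝ) ≤ 1 + t * xb i := by
    intro t ht i
    nlinarith [hxb i]
  have hfacpos : ∀ t : ℝ, 0 ≤ t → ∀ i, (0:ℝ) < 1 + t * xb i :=
    fun t ht i => lt_of_lt_of_le one_pos (hfac t ht i)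
  have hPpos : ∀ t : ℝ, 0 ≤ t → 0 < P t := fun t ht => by
    rw [hP_def]; exact Finset.prod_pos fun i _ => hfacpos t ht i
  have hP1 : ∀ t : ℝ, 0 ≤ t → 1 ≤ P t := fun t ht => by
    simp only [hP_def]
    calc (1:ℝ) = ∏ _k : Fin n, 1 := by simp
      _ ≤ ∏ k, (1 + t * xb k) :=
        Finset.prod_le_prod (fun i _ => zero_le_one) (fun i _ => hfac t ht i)
  have hSnn : 0 ≤ S := Finset.sum_nonneg fun k _ =>
    mul_nonneg (by linarith [hN k]) (hxb k).le
  have hgpos : ∀ t : ℝ, 0 ≤ t → 0 < g t := by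
    intro t ht
    rw [hg_eq]
    nlinarith [hP1 t ht, mul_nonneg ht hSnn]
  -- strict monotonicity of φ on [0, ∞)
  have hφmono : ∀ s t : ℝ, 0 ≤ s → s < t → φ s < φ t := by
    intro s t hs hst
    have ht : 0 ≤ t := le_trans hs hst.le
    have hrep : ∀ r : ℝ, 0 ≤ r →
        φ r = (∑ i, (1 - 1 / (1 + r * xb i))) + (1 - a) * ∏ i, (1 / (1 + r * xb i)) := by
      intro r hr
      rw [hφ_eq]
      congr 1
      · refine Finset.sum_congr rfl fun i _ => ?_
        have hne := (hfacpos r hr i).ne'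
        field_simp
        ring
      · rw [div_eq_mul_inv]
        congr 1
        rw [hP_def, ← Finset.prod_inv_distrib]
        exact Finset.prod_congr rfl fun i _ => (one_div _).symm
    set u : Fin n → ℝ := fun i => 1 / (1 + s * xb i) with hu
    set w : Fin n → ℝ := fun i => 1 / (1 + t * xb i) with hw
    have hw0 : ∀ i, 0 < w i := fun i => by
      rw [hw]; exact div_pos one_pos (hfacpos t ht i)
    have hwu : ∀ i, w i < u i := by
      intro i
      rw [hu, hw]
      apply div_lt_div_of_pos_left one_pos (hfacpos s hs i)
      nlinarith [hxb i]
    have hu1 : ∀ i, u i ≤ 1 := fun i => by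
      rw [hu]; exact div_le_one_of_le₀ (hfac s hs i) (by linarith [hfacpos s hs i])
    have key := aux_prod_sub_prod_le_sum Finset.univ u w
      (fun i _ => (hw0 i).le) (fun i _ => (hwu i).le) (fun i _ => hu1 i)
    have hne0 : (Finset.univ : Finset (Fin n)).Nonempty :=
      ⟨⟨0, by omega⟩, Finset.mem_univ _⟩
    have hApos : 0 < ∑ i, (u i - w i) :=
      Finset.sum_pos (fun i _ => by linarith [hwu i]) hne0
    have hD0 : 0 ≤ ∏ i, u i - ∏ i, w i := by
      have : ∏ i, w i ≤ ∏ i, u i :=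
        Finset.prod_le_prod (fun i _ => (hw0 i).le) (fun i _ => (hwu i).le)
      linarith
    have hdiff : (∑ i, (1 - w i)) - (∑ i, (1 - u i)) = ∑ i, (u i - w i) := by
      rw [← Finset.sum_sub_distrib]
      exact Finset.sum_congr rfl fun i _ => by ring
    rw [hrep s hs, hrep t ht]
    have hmul : (1 - a) * (∏ i, u i - ∏ i, w i) ≤ (1 - a) * ∑ i, (u i - w i) :=
      mul_le_mul_of_nonneg_left key (by linarith)
    nlinarith [mul_pos ha0 hApos]
  -- derivatives
  have hPderiv : ∀ t : ℝ, HasDerivAt P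
      (∑ i, (∏ j ∈ Finset.univ.erase i, (1 + t * xb j)) * xb i) t := by
    intro t
    have h := HasDerivAt.fun_finsetProd (u := (Finset.univ : Finset (Fin n)))
      (f := fun i r => 1 + r * xb i) (f' := fun i => xb i) (x := t)
      (fun i _ => by simpa using ((hasDerivAt_id t).mul_const (xb i)).const_add 1)
    simpa [smul_eq_mul, hP_def] using h
  have hgderiv : ∀ t : ℝ, HasDerivAt g
      (S + ∑ i, (∏ j ∈ Finset.univ.erase i, (1 + t * xb j)) * xb i) t := by
    intro t
    have hgfun : g = fun r => a - 1 + r * S + P r := funext hg_eq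
    rw [hgfun]
    have h1 : HasDerivAt (fun r : ℝ => a - 1 + r * S) S t := by
      simpa using ((hasDerivAt_id t).mul_const S).const_add (a - 1)
    exact h1.add (hPderiv t)
  have hfderiv : ∀ t : ℝ, 0 ≤ t →
      HasDerivAt (fun r : ℝ => r / g r) (P t * (1 - φ t) / (g t) ^ 2) t := by
    intro t ht
    have hne := (hgpos t ht).ne'
    have h := (hasDerivAt_id t).div (hgderiv t) hne
    refine h.congr_deriv ?_
    symm
    congr 1
    have hDt : t * (∑ i, (∏ j ∈ Finset.univ.erase i, (1 + t * xb j)) * xb i)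
        = P t * ∑ i, (t * xb i) / (1 + t * xb i) := by
      rw [Finset.mul_sum, Finset.mul_sum]
      refine Finset.sum_congr rfl fun i _ => ?_
      have hP_i : P t = (1 + t * xb i) * ∏ j ∈ Finset.univ.erase i, (1 + t * xb j) :=
        (Finset.mul_prod_erase Finset.univ _ (Finset.mem_univ i)).symm
      have hne2 := (hfacpos t ht i).ne'
      rw [hP_i]
      field_simp
    have hPne := (hPpos t ht).ne'
    rw [hφ_eq, hg_eq]
    field_simp
    simp only [id_eq]
    nlinarith [hDt]
  -- continuity
  have hgcont : ∀ s : Set ℝ, ContinuousOn g s := fun s x _ =>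
    ((hgderiv x).continuousAt).continuousWithinAt
  have hPcont : Continuous P := by
    rw [hP_def]
    exact continuous_finset_prod _ fun i _ => continuous_const.add (continuous_id.mul continuous_const)
  have hφcont : ∀ s : Set ℝ, s ⊆ Set.Ici 0 → ContinuousOn φ s := by
    intro s hsub
    have hφfun : φ = fun t => (∑ i, (t * xb i) / (1 + t * xb i)) + (1 - a) / P t :=
      funext hφ_eq
    rw [hφfun]
    apply ContinuousOn.add
    · apply continuousOn_finset_sum
      intro i _
      exact ContinuousOn.div ((continuous_id.mul continuous_const).continuousOn)
        ((continuous_const.add (continuous_id.mul continuous_const)).continuousOn)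
        (fun x hx => (hfacpos x (hsub hx) i).ne')
    · exact ContinuousOn.div continuousOn_const hPcont.continuousOn
        (fun x hx => (hPpos x (hsub hx)).ne')
  -- existence of lam via IVT
  set T : ℝ := ∑ i, 2 / xb i with hT_def
  have hne0 : (Finset.univ : Finset (Fin n)).Nonempty := ⟨⟨0, by omega⟩, Finset.mem_univ _⟩
  have hT0 : 0 < T := Finset.sum_pos (fun i _ => div_pos two_pos (hxb i)) hne0
  have hTxb : ∀ i, (2:ℝ) ≤ T * xb i := by
    intro i
    have h1 : 2 / xb i ≤ T :=
      Finset.single_le_sum (fun j _ => (div_pos two_pos (hxb j)).le) (Finset.mem_univ i)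
    rw [div_le_iff₀ (hxb i)] at h1
    linarith
  have hφT : 1 < φ T := by
    rw [hφ_eq]
    have h2 : ∀ i, (2:ℝ)/3 ≤ (T * xb i) / (1 + T * xb i) := by
      intro i
      rw [div_le_div_iff₀ (by norm_num) (hfacpos T hT0.le i)]
      nlinarith [hTxb i]
    have hsum : (n : ℝ) * (2/3) ≤ ∑ i, (T * xb i) / (1 + T * xb i) := by
      have := Finset.card_nsmul_le_sum Finset.univ
        (fun i => (T * xb i) / (1 + T * xb i)) (2/3) (fun i _ => h2 i)
      simpa [Finset.card_univ, nsmul_eq_mul] using this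
    have hpos2 : 0 < (1 - a) / P T := div_pos (by linarith) (hPpos T hT0.le)
    have hn2 : (2:ℝ) ≤ (n : ℝ) := by exact_mod_cast hn
    nlinarith
  have hφ0 : φ 0 = 1 - a := by
    rw [hφ_eq]
    simp [hP_def]
  have hIVT := intermediate_value_Ioo hT0.le (hφcont _ (fun x hx => hx.1))
  have h1mem : (1 : ℝ) ∈ Set.Ioo (φ 0) (φ T) := ⟨by rw [hφ0]; linarith, hφT⟩
  obtain ⟨lam, hlamIoo, hlamφ⟩ := hIVT h1mem
  have hlam0 : 0 < lam := hlamIoo.1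
  have hMono : StrictMonoOn (fun t : ℝ => t / g t) (Set.Icc 0 lam) := by
    apply strictMonoOn_of_deriv_pos (convex_Icc 0 lam)
    · exact ContinuousOn.div continuousOn_id (hgcont _) (fun x hx => (hgpos x hx.1).ne')
    · intro t htmem
      rw [interior_Icc] at htmem
      rw [(hfderiv t htmem.1.le).deriv]
      have hφlt : φ t < 1 := by
        rw [← hlamφ]
        exact hφmono t lam htmem.1.le htmem.2
      exact div_pos (mul_pos (hPpos t htmem.1.le) (by linarith))
        (pow_pos (hgpos t htmem.1.le) 2)
  have hAnti : StrictAntiOn (fun t : ℝ => t / g t) (Set.Ici lam) := by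
    apply strictAntiOn_of_deriv_neg (convex_Ici lam)
    · exact ContinuousOn.div continuousOn_id (hgcont _)
        (fun x hx => (hgpos x (le_trans hlam0.le hx)).ne')
    · intro t htmem
      rw [interior_Ici] at htmem
      have ht0 : 0 ≤ t := le_trans hlam0.le htmem.le
      rw [(hfderiv t ht0).deriv]
      have hφgt : 1 < φ t := by
        rw [← hlamφ]
        exact hφmono lam t hlam0.le htmem
      apply div_neg_of_neg_of_pos
      · exact mul_neg_of_pos_of_neg (hPpos t ht0) (by linarith)
      · exact pow_pos (hgpos t ht0) 2
  refine ⟨lam, hlam0, hlamφ, ?_, hMono, hAnti, ?_⟩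
  · -- uniqueness
    intro μ hμ hμ1
    rcases lt_trichotomy μ lam with h | h | h
    · exact absurd (hφmono μ lam hμ.le h)
        (by rw [show φ μ = 1 from hμ1, hlamφ]; exact lt_irrefl 1)
    · exact h
    · exact absurd (hφmono lam μ hlam0.le h)
        (by rw [show φ μ = 1 from hμ1, hlamφ]; exact lt_irrefl 1)
  · intro t ht htne
    rcases htne.lt_or_gt with h | h
    · exact hMono (Set.mem_Icc.mpr ⟨ht, h.le⟩) (Set.mem_Icc.mpr ⟨hlam0.le, le_refl lam⟩) h
    · exact hAnti (Set.self_mem_Ici) (Set.mem_Ici.mpr h.le) h
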